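/- Suppose u_γ ∈ V satisfies ν·a(u_γ,v) + γ·j(u_γ,v) = F(v) for all v ∈ V, and û ∈ N satisfies ν·a(û,n) = F(n) for all n ∈ N. Then |||u_γ − û||| ≤ (C_PF/C_R)·γ⁻¹·L; in particular the bound is independent of ν and the penalized solution converges to the limit solution û in the energy norm with rate O(γ⁻¹) as γ → ∞. (This is the abstract form of the velocity estimate (46a) of Theorem 3.8: as the mass-flux penalization parameter γ tends to infinity, the stabilized DG solution converges with rate γ⁻¹ to the weakly divergence-free H(div)-DG solution, so over-stabilization is impossible.) -/

import Mathlib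

/-- Cauchy–Schwarz degenerate case for a PSD symmetric bilinear form:
if `j n n = 0` then `j v n = 0`. -/
lemma psd_kernel {V : Type*} [NormedAddCommGroup V] [NormedSpace ℝ V]
    (j : V →ₗ[ℝ] V →ₗ[ℝ] ℝ)
    (hjsymm : ∀ v w : V, j v w = j w v)
    (hjpos : ∀ v : V, 0 ≤ j v v)
    (v n : V) (hn : j n n = 0) : j v n = 0 := by
  by_contra hc
  set c := j v n with hcdef
  set t : ℝ := -(j v v + 1) / (2 * c) with ht
  have hexp : j (v + t • n) (v + t • n) = j v v + 2 * t * c := by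
    simp only [map_add, map_smul, LinearMap.add_apply, LinearMap.smul_apply,
      smul_eq_mul]
    rw [hjsymm n v, hn]
    ring
  have h2 : 2 * t * c = -(j v v + 1) := by
    rw [ht]; field_simp
  have := hjpos (v + t • n)
  rw [hexp, h2] at this
  linarith

/-- Abstract form of the velocity estimate (46a) of Theorem 3.8: as the
mass-flux penalization parameter `γ` tends to infinity, the stabilized DG
solution `u_γ` converges in the energy norm (the instance norm of `V`) with
rate `γ⁻¹` to the weakly divergence-free `H(div)`-DG solution `û`, with a
bound independent of `ν`; in particular over-stabilization is impossible. -/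
theorem convergence_to_Hdiv_solution_velocity
    (V : Type*) [NormedAddCommGroup V] [NormedSpace ℝ V] [FiniteDimensional ℝ V]
    (l2 : V → ℝ)
    (hl2_add : ∀ v w : V, l2 (v + w) ≤ l2 v + l2 w)
    (hl2_smul : ∀ (c : ℝ) (v : V), l2 (c • v) = |c| * l2 v)
    (hl2_def : ∀ v : V, l2 v = 0 → v = 0)
    (C_PF C_σ C_R ν γ L : ℝ)
    (hCPF : 0 < C_PF) (hCσ : 0 < C_σ) (hCR : 0 < C_R)
    (hν : 0 < ν) (hγ : 0 < γ) (hL : 0 ≤ L)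
    (hPF : ∀ v : V, l2 v ≤ C_PF * ‖v‖)
    (a j : V →ₗ[ℝ] V →ₗ[ℝ] ℝ)
    (hasymm : ∀ v w : V, a v w = a w v)
    (hcoer : ∀ v : V, C_σ * ‖v‖ ^ 2 ≤ a v v)
    (hjsymm : ∀ v w : V, j v w = j w v)
    (hjpos : ∀ v : V, 0 ≤ j v v)
    (N : Submodule ℝ V)
    (hN : ∀ v : V, v ∈ N ↔ j v v = 0)
    -- coercivity of `j` on the `a`-orthogonal complement `R` of `N`
    -- (such `C_R` exists by finite-dimensional norm equivalence):
    (hjR : ∀ r : V, (∀ n ∈ N, a r n = 0) → C_R * ‖r‖ ^ 2 ≤ j r r)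
    (F : V →ₗ[ℝ] ℝ)
    (hF : ∀ v : V, |F v| ≤ L * l2 v)
    (uγ : V)
    (huγ : ∀ v : V, ν * a uγ v + γ * j uγ v = F v)
    (uhat : V) (huhatN : uhat ∈ N)
    (huhat : ∀ n ∈ N, ν * a uhat n = F n) :
    ‖uγ - uhat‖ ≤ (C_PF / C_R) * γ⁻¹ * L := by
  set e := uγ - uhat with he
  -- j kills N in both slots
  have hjkill : ∀ v : V, ∀ n ∈ N, j v n = 0 := fun v n hn =>
    psd_kernel j hjsymm hjpos v n ((hN n).mp hn)
  -- e is a-orthogonal to N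
  have heR : ∀ n ∈ N, a e n = 0 := by
    intro n hn
    have h1 := huγ n
    have h2 := huhat n hn
    have h3 : j uγ n = 0 := hjkill uγ n hn
    have : ν * a uγ n = ν * a uhat n := by rw [h2]; rw [h3] at h1; linarith
    have h4 : a uγ n = a uhat n := by
      have := mul_left_cancel₀ (ne_of_gt hν) this
      exact this
    have : a e n = a uγ n - a uhat n := by
      simp [he, map_sub]
    rw [this, h4]; ring
  -- key identity: ν a(e,e) + γ j(e,e) = F e
  have hkey : ν * a e e + γ * j e e = F e := by
    have h1 := huγ e
    have hja : j uγ e = j e e := by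
      have : j uγ e = j e e + j uhat e := by
        have : uγ = e + uhat := by simp [he]
        rw [this]; simp [map_add]
      rw [this, hjsymm uhat e, hjkill e uhat huhatN]; ring
    have haa : a uγ e = a e e := by
      have : uγ = e + uhat := by simp [he]
      rw [this]
      simp only [map_add, LinearMap.add_apply]
      rw [hasymm uhat e, heR uhat huhatN]; ring
    rw [haa, hja] at h1
    exact h1
  have hje : C_R * ‖e‖ ^ 2 ≤ j e e := hjR e heR
  have hae : 0 ≤ a e e := le_trans (by positivity) (hcoer e)
  have hFe : F e ≤ L * (C_PF * ‖e‖) := by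
    calc F e ≤ |F e| := le_abs_self _
    _ ≤ L * l2 e := hF e
    _ ≤ L * (C_PF * ‖e‖) := by
        apply mul_le_mul_of_nonneg_left (hPF e) hL
  have hmain : γ * (C_R * ‖e‖ ^ 2) ≤ L * C_PF * ‖e‖ := by
    have : γ * j e e ≤ F e := by nlinarith
    nlinarith [mul_le_mul_of_nonneg_left hje (le_of_lt hγ)]
  rcases eq_or_lt_of_le (norm_nonneg e) with h0 | h0
  · rw [← h0]
    positivity
  · have : γ * C_R * ‖e‖ ≤ L * C_PF := by
      have := hmain
      nlinarith
    rw [div_mul_eq_mul_div, div_mul_eq_mul_div, le_div_iff₀ (by positivity)]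
    have h2 : C_R * ‖e‖ ≤ L * C_PF / γ := (le_div_iff₀ hγ).mpr (by linarith)
    rw [div_eq_mul_inv] at h2
    linarith [h2]
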